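/- Let G be a disconnected d-distinguishing critical graph with d ≥ 5 and c(G) connected components all isomorphic to H, and suppose c(G) < d/2. Then d = D(H) + 1, D(H) ≥ 4, and D(H, D(H)) < (D(H) − 1)/2. -/

import Mathlib

/-- A labeling with `r` labels is distinguishing if the only automorphism
preserving all labels is the identity. -/
def IsDistinguishing {V : Type*} (G : SimpleGraph V) (r : ℕ) (f : V → Fin r) : Prop :=
  ∀ φ : G ≃g G, (∀ v, f (φ v) = f v) → ∀ v, φ v = v

/-- The distinguishing number of a graph. -/
noncomputable def distNum {V : Type*} (G : SimpleGraph V) : ℕ :=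
  sInf {r : ℕ | ∃ f : V → Fin r, IsDistinguishing G r f}

/-- A graph is `d`-distinguishing critical if its distinguishing number is `d`
and no proper induced subgraph has distinguishing number `d`. -/
def DistCritical {V : Type*} (G : SimpleGraph V) (d : ℕ) : Prop :=
  distNum G = d ∧ ∀ s : Set V, s ≠ Set.univ → distNum (G.induce s) ≠ d

/-- The disjoint union of `c` copies of a graph `H`. -/
def copies {W : Type*} (c : ℕ) (H : SimpleGraph W) : SimpleGraph (Fin c × W) where
  Adj a b := a.1 = b.1 ∧ H.Adj a.2 b.2
  symm := ⟨fun a b h => ⟨h.1.symm, h.2.symm⟩⟩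
  loopless := ⟨fun a h => H.loopless.irrefl a.2 h.2⟩

/-- `numDistLab G k` is the number of inequivalent `k`-distinguishing labelings of `G`,
two labelings being equivalent when some automorphism of `G` maps one to the other. -/
noncomputable def numDistLab {V : Type*} (G : SimpleGraph V) (k : ℕ) : ℕ :=
  Nat.card (Quot (fun f g : {f : V → Fin k // IsDistinguishing G k f} =>
    ∃ φ : G ≃g G, ∀ v, f.1 (φ v) = g.1 v))

section Basics
variable {V V' : Type*} {G : SimpleGraph V} {G' : SimpleGraph V'}

/-- composing with an injective recoloring preserves distinguishing -/
lemma IsDistinguishing.comp_inj {r r' : ℕ} {f : V → Fin r} (ι : Fin r → Fin r')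
    (hι : Function.Injective ι) (hf : IsDistinguishing G r f) :
    IsDistinguishing G r' (ι ∘ f) := by
  intro φ hφ v
  exact hf φ (fun v => hι (hφ v)) v

lemma distSet_nonempty [Finite V] (G : SimpleGraph V) :
    {r : ℕ | ∃ f : V → Fin r, IsDistinguishing G r f}.Nonempty := by
  cases nonempty_fintype V
  refine ⟨Fintype.card V, Fintype.equivFin V, ?_⟩
  intro φ hφ v
  exact (Fintype.equivFin V).injective (hφ v)

lemma exists_distNum [Finite V] (G : SimpleGraph V) :
    ∃ f : V → Fin (distNum G), IsDistinguishing G (distNum G) f :=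
  Nat.sInf_mem (distSet_nonempty G)

lemma distNum_le {r : ℕ} {f : V → Fin r} (hf : IsDistinguishing G r f) :
    distNum G ≤ r :=
  Nat.sInf_le ⟨f, hf⟩

lemma exists_of_distNum_le [Finite V] (G : SimpleGraph V) {r : ℕ} (h : distNum G ≤ r) :
    ∃ f : V → Fin r, IsDistinguishing G r f := by
  obtain ⟨f, hf⟩ := exists_distNum G
  exact ⟨Fin.castLE h ∘ f, hf.comp_inj _ (Fin.castLE_injective h)⟩

lemma distNum_empty [IsEmpty V] (G : SimpleGraph V) : distNum G = 0 :=
  Nat.sInf_eq_zero.mpr (Or.inl ⟨fun v => isEmptyElim v, fun _ _ v => isEmptyElim v⟩)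

lemma IsDistinguishing.comp_iso (e : G ≃g G') {r : ℕ} {f : V' → Fin r}
    (hf : IsDistinguishing G' r f) : IsDistinguishing G r (f ∘ e) := by
  intro φ hφ v
  have key : ∀ u, ((e.symm.trans φ).trans e) u = u := by
    refine hf ((e.symm.trans φ).trans e) ?_
    intro u
    simpa using hφ (e.symm u)
  have := key (e v)
  simp at this
  exact this

lemma distNum_iso (e : G ≃g G') : distNum G = distNum G' := by
  unfold distNum
  congr 1
  ext r
  exact ⟨fun ⟨f, hf⟩ => ⟨f ∘ e.symm, hf.comp_iso e.symm⟩,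
         fun ⟨f, hf⟩ => ⟨f ∘ e, hf.comp_iso e⟩⟩

/-- iso between induced subgraphs -/
noncomputable def induceIso (e : G ≃g G') (s : Set V') :
    G.induce (⇑e ⁻¹' s) ≃g G'.induce s where
  toFun x := ⟨e x.1, x.2⟩
  invFun y := ⟨e.symm y.1, by simpa using y.2⟩
  left_inv x := Subtype.ext (e.toEquiv.symm_apply_apply x.1)
  right_inv y := Subtype.ext (e.toEquiv.apply_symm_apply y.1)
  map_rel_iff' := by
    intro a b
    simp [SimpleGraph.comap_adj, e.map_adj_iff]

end Basics

section Copies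
variable {W : Type*} {c : ℕ} {H : SimpleGraph W}

lemma copies_adj {x y : Fin c × W} :
    (copies c H).Adj x y ↔ x.1 = y.1 ∧ H.Adj x.2 y.2 := Iff.rfl

lemma reachable_fst {x y : Fin c × W} (h : (copies c H).Reachable x y) : x.1 = y.1 := by
  obtain ⟨w⟩ := h
  induction w with
  | nil => rfl
  | cons h _ ih => exact h.1.trans ih

/-- embedding of `H` as the `j`-th component -/
def copyHom (j : Fin c) : H →g copies c H where
  toFun v := (j, v)
  map_rel' h := ⟨rfl, h⟩

lemma iso_fst_const (hH : H.Connected) (ψ : copies c H ≃g copies c H) (j : Fin c)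
    (v w : W) : (ψ (j, v)).1 = (ψ (j, w)).1 := by
  have h1 : (copies c H).Reachable (j, v) (j, w) :=
    ((hH v w).map (copyHom j) : _)
  exact reachable_fst (h1.map ψ.toHom)

end Copies

section Combine
variable {W : Type*} {c : ℕ} {H : SimpleGraph W}

lemma combine_dist (hH : H.Connected) {k : ℕ} (f : Fin c → W → Fin k)
    (hdist : ∀ j, IsDistinguishing H k (f j))
    (hpair : ∀ a b : Fin c, (∃ φ : H ≃g H, ∀ v, f a (φ v) = f b v) → a = b) :
    IsDistinguishing (copies c H) k (fun x => f x.1 x.2) := by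
  intro ψ hψ x
  obtain ⟨j, v⟩ := x
  set σ : Fin c := (ψ (j, v)).1 with hσ
  have hfst : ∀ w, (ψ (j, w)).1 = σ := fun w => iso_fst_const hH ψ j w v
  have hpsi : ∀ w, ψ (j, w) = (σ, (ψ (j, w)).2) := by
    intro w; exact Prod.ext (hfst w) rfl
  have hsymm_fst : ∀ u, (ψ.symm (σ, u)).1 = j := by
    intro u
    have h1 : (ψ.symm (σ, u)).1 = (ψ.symm (σ, (ψ (j, v)).2)).1 :=
      iso_fst_const hH ψ.symm σ u (ψ (j, v)).2
    rw [h1, ← hpsi v]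
    simp
  -- the induced automorphism of H on component j
  have hsymm : ∀ u, ψ.symm (σ, u) = (j, (ψ.symm (σ, u)).2) := by
    intro u; exact Prod.ext (hsymm_fst u) rfl
  let φe : W ≃ W :=
    { toFun := fun w => (ψ (j, w)).2
      invFun := fun u => (ψ.symm (σ, u)).2
      left_inv := by
        intro w
        show (ψ.symm (σ, (ψ (j, w)).2)).2 = w
        rw [← hpsi w]
        simp
      right_inv := by
        intro u
        show (ψ (j, (ψ.symm (σ, u)).2)).2 = u
        rw [← hsymm u]
        simp }
  have hφadj : ∀ a b : W, H.Adj (φe a) (φe b) ↔ H.Adj a b := by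
    intro a b
    have h1 : (copies c H).Adj (ψ (j, a)) (ψ (j, b)) ↔ (copies c H).Adj (j, a) (j, b) :=
      ψ.map_adj_iff
    rw [hpsi a, hpsi b] at h1
    simpa [copies_adj, φe] using h1
  let φ : H ≃g H := ⟨φe, by intro a b; exact hφadj a b⟩
  have hrel : ∀ w, f σ (φ w) = f j w := by
    intro w
    have := hψ (j, w)
    rw [hpsi w] at this
    exact this
  have hσj : σ = j := hpair σ j ⟨φ, hrel⟩
  have hid : ∀ w, φ w = w := by
    refine hdist j φ ?_
    intro w
    have := hrel w
    rwa [hσj] at this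
  have h2 : (ψ (j, v)).2 = v := hid v
  rw [hpsi v, h2, hσj]
end Combine
section Restrict
variable {W : Type*} {c : ℕ} {H : SimpleGraph W} (j₀ : Fin c)

lemma mem_s0 {x : Fin c × W} : x ∈ ({x : Fin c × W | x.1 ≠ j₀} : Set (Fin c × W)) ↔ x.1 ≠ j₀ :=
  Iff.rfl

lemma restrict_dist {r : ℕ} {f : Fin c × W → Fin r}
    (hf : IsDistinguishing (copies c H) r f) :
    IsDistinguishing ((copies c H).induce {x | x.1 ≠ j₀}) r (fun x => f x.1) := by
  classical
  set s : Set (Fin c × W) := {x | x.1 ≠ j₀} with hs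
  intro φ hφ x
  -- extend φ to an automorphism Ψ of copies c H
  let Ψe : (Fin c × W) ≃ (Fin c × W) :=
    { toFun := fun y => if h : y ∈ s then (φ ⟨y, h⟩ : Fin c × W) else y
      invFun := fun y => if h : y ∈ s then (φ.symm ⟨y, h⟩ : Fin c × W) else y
      left_inv := by
        intro y
        by_cases h : y ∈ s
        · simp only [dif_pos h, dif_pos (φ ⟨y, h⟩).2]
          rw [show (⟨(φ ⟨y, h⟩ : Fin c × W), (φ ⟨y, h⟩).2⟩ : s) = φ ⟨y, h⟩ from rfl]
          simp
        · simp only [dif_neg h]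
      right_inv := by
        intro y
        by_cases h : y ∈ s
        · simp only [dif_pos h, dif_pos (φ.symm ⟨y, h⟩).2]
          rw [show (⟨(φ.symm ⟨y, h⟩ : Fin c × W), (φ.symm ⟨y, h⟩).2⟩ : s) = φ.symm ⟨y, h⟩ from rfl]
          simp
        · simp only [dif_neg h] }
  have hΨadj : ∀ a b : Fin c × W,
      (copies c H).Adj (Ψe a) (Ψe b) ↔ (copies c H).Adj a b := by
    intro a b
    by_cases ha : a ∈ s <;> by_cases hb : b ∈ s
    · simp only [Ψe, Equiv.coe_fn_mk, dif_pos ha, dif_pos hb]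
      exact φ.map_adj_iff (v := ⟨a, ha⟩) (w := ⟨b, hb⟩)
    · simp only [Ψe, Equiv.coe_fn_mk, dif_pos ha, dif_neg hb]
      have hb' : b.1 = j₀ := not_not.mp hb
      constructor
      · rintro ⟨h1, -⟩
        exact absurd (h1.trans hb') (φ ⟨a, ha⟩).2
      · rintro ⟨h1, -⟩
        exact absurd (h1.trans hb') ha
    · simp only [Ψe, Equiv.coe_fn_mk, dif_neg ha, dif_pos hb]
      have ha' : a.1 = j₀ := not_not.mp ha
      constructor
      · rintro ⟨h1, -⟩
        exact absurd (h1.symm.trans ha') (φ ⟨b, hb⟩).2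
      · rintro ⟨h1, -⟩
        exact absurd (h1.symm.trans ha') hb
    · simp only [Ψe, Equiv.coe_fn_mk, dif_neg ha, dif_neg hb]
  let Ψ : copies c H ≃g copies c H := ⟨Ψe, by intro a b; exact hΨadj a b⟩
  have hΨid : ∀ y, Ψ y = y := by
    refine hf Ψ ?_
    intro y
    show f (Ψe y) = f y
    by_cases h : y ∈ s
    · simp only [Ψe, Equiv.coe_fn_mk, dif_pos h]
      exact hφ ⟨y, h⟩
    · simp only [Ψe, Equiv.coe_fn_mk, dif_neg h]
  have := hΨid x.1
  show _ = x
  have hx : Ψe x.1 = (φ x : Fin c × W) := by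
    simp only [Ψe, Equiv.coe_fn_mk, dif_pos x.2]
  apply Subtype.ext
  rw [← hx]
  exact this
end Restrict
section Single
variable {W : Type*} {c : ℕ} {H : SimpleGraph W} {j₀ : Fin c}

lemma induce_adj_copies {s : Set (Fin c × W)} (a b : s) :
    ((copies c H).induce s).Adj a b ↔
      (a : Fin c × W).1 = (b : Fin c × W).1 ∧ H.Adj (a : Fin c × W).2 (b : Fin c × W).2 :=
  Iff.rfl

/-- apply `φ` on copy `j`, identity elsewhere -/
def mapA {W : Type*} {c : ℕ} {j₀ : Fin c} (H : SimpleGraph W) (φ : W ≃ W) (j : Fin c)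
    (hj : j ≠ j₀) (x : ({x : Fin c × W | x.1 ≠ j₀})) :
    ({x : Fin c × W | x.1 ≠ j₀}) :=
  if (x : Fin c × W).1 = j then ⟨(j, φ (x : Fin c × W).2), hj⟩ else x

lemma mapA_apply_of_eq (φ : W ≃ W) {j : Fin c} (hj : j ≠ j₀) (x : ({x : Fin c × W | x.1 ≠ j₀}))
    (h : (x : Fin c × W).1 = j) : mapA H φ j hj x = ⟨(j, φ (x : Fin c × W).2), hj⟩ := if_pos h

lemma mapA_apply_of_ne (φ : W ≃ W) {j : Fin c} (hj : j ≠ j₀) (x : ({x : Fin c × W | x.1 ≠ j₀}))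
    (h : ¬ (x : Fin c × W).1 = j) : mapA H φ j hj x = x := if_neg h

lemma mapA_mapA (φ ψ : W ≃ W) {j : Fin c} (hj : j ≠ j₀) (h : ∀ w, ψ (φ w) = w)
    (x : ({x : Fin c × W | x.1 ≠ j₀})) : mapA H ψ j hj (mapA H φ j hj x) = x := by
  by_cases hx : (x : Fin c × W).1 = j
  · rw [mapA_apply_of_eq φ hj x hx, mapA_apply_of_eq ψ hj _ rfl]
    exact Subtype.ext (Prod.ext hx.symm (h _))
  · rw [mapA_apply_of_ne φ hj x hx, mapA_apply_of_ne ψ hj x hx]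

lemma single_copy_dist {k : ℕ} {g : ({x : Fin c × W | x.1 ≠ j₀}) → Fin k}
    (hg : IsDistinguishing ((copies c H).induce {x | x.1 ≠ j₀}) k g)
    {j : Fin c} (hj : j ≠ j₀) :
    IsDistinguishing H k (fun v => g ⟨(j, v), hj⟩) := by
  classical
  intro φ hφ v
  let Φe : ({x : Fin c × W | x.1 ≠ j₀}) ≃ ({x : Fin c × W | x.1 ≠ j₀}) :=
    { toFun := mapA H φ.toEquiv j hj
      invFun := mapA H φ.toEquiv.symm j hj
      left_inv := fun x => mapA_mapA _ _ hj (fun w => φ.toEquiv.symm_apply_apply w) x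
      right_inv := fun x => mapA_mapA _ _ hj (fun w => φ.toEquiv.apply_symm_apply w) x }
  have hΦadj : ∀ x y, ((copies c H).induce {x : Fin c × W | x.1 ≠ j₀}).Adj (Φe x) (Φe y) ↔
      ((copies c H).induce {x : Fin c × W | x.1 ≠ j₀}).Adj x y := by
    intro x y
    show ((copies c H).induce _).Adj (mapA H φ.toEquiv j hj x) (mapA H φ.toEquiv j hj y) ↔ _
    by_cases hx : (x : Fin c × W).1 = j <;> by_cases hy : (y : Fin c × W).1 = j
    · rw [mapA_apply_of_eq _ hj x hx, mapA_apply_of_eq _ hj y hy,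
        induce_adj_copies, induce_adj_copies]
      constructor
      · rintro ⟨-, h2⟩
        exact ⟨hx.trans hy.symm, φ.map_adj_iff.mp h2⟩
      · rintro ⟨-, h2⟩
        exact ⟨rfl, φ.map_adj_iff.mpr h2⟩
    · rw [mapA_apply_of_eq _ hj x hx, mapA_apply_of_ne _ hj y hy,
        induce_adj_copies, induce_adj_copies]
      constructor
      · rintro ⟨h1, -⟩
        exact absurd h1.symm hy
      · rintro ⟨h1, -⟩
        exact absurd (h1.symm.trans hx) hy
    · rw [mapA_apply_of_ne _ hj x hx, mapA_apply_of_eq _ hj y hy,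
        induce_adj_copies, induce_adj_copies]
      constructor
      · rintro ⟨h1, -⟩
        exact absurd h1 hx
      · rintro ⟨h1, -⟩
        exact absurd (h1.trans hy) hx
    · rw [mapA_apply_of_ne _ hj x hx, mapA_apply_of_ne _ hj y hy]
  let Φ : (copies c H).induce {x : Fin c × W | x.1 ≠ j₀} ≃g
      (copies c H).induce {x : Fin c × W | x.1 ≠ j₀} := ⟨Φe, by intro a b; exact hΦadj a b⟩
  have hid : ∀ x, Φ x = x := by
    refine hg Φ ?_
    intro x
    show g (mapA H φ.toEquiv j hj x) = g x
    by_cases h : (x : Fin c × W).1 = j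
    · rw [mapA_apply_of_eq _ hj x h]
      have hx' : x = ⟨(j, (x : Fin c × W).2), hj⟩ := Subtype.ext (Prod.ext h rfl)
      rw [hx']
      exact hφ (x : Fin c × W).2
    · rw [mapA_apply_of_ne _ hj x h]
  have h1 : Φ ⟨(j, v), hj⟩ = ⟨(j, v), hj⟩ := hid ⟨(j, v), hj⟩
  have h2 : Φ ⟨(j, v), hj⟩ = ⟨(j, φ v), hj⟩ := mapA_apply_of_eq (H := H) _ hj _ rfl
  have h3 : (⟨(j, φ v), hj⟩ : ({x : Fin c × W | x.1 ≠ j₀})) = ⟨(j, v), hj⟩ := h2 ▸ h1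
  exact congrArg (fun z : ({x : Fin c × W | x.1 ≠ j₀}) => (z : Fin c × W).2) h3
end Single
section Count
variable {V : Type*} {G : SimpleGraph V} {k : ℕ}

lemma labRel_equivalence :
    Equivalence (fun f g : {f : V → Fin k // IsDistinguishing G k f} =>
      ∃ φ : G ≃g G, ∀ v, f.1 (φ v) = g.1 v) := by
  constructor
  · exact fun f => ⟨RelIso.refl _, fun v => rfl⟩
  · rintro f g ⟨φ, h⟩
    refine ⟨φ.symm, fun u => ?_⟩
    have := h (φ.symm u)
    rw [φ.apply_symm_apply] at this
    exact this.symm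
  · rintro f g h ⟨φ, hφ⟩ ⟨ψ, hψ⟩
    refine ⟨ψ.trans φ, fun v => ?_⟩
    have h1 : f.1 (φ (ψ v)) = g.1 (ψ v) := hφ (ψ v)
    rw [hψ v] at h1
    exact h1

lemma numDistLab_ge [Finite V] {α : Type*} [Fintype α]
    (F : α → {f : V → Fin k // IsDistinguishing G k f})
    (hpair : ∀ a b : α, (∃ φ : G ≃g G, ∀ v, (F a).1 (φ v) = (F b).1 v) → a = b) :
    Fintype.card α ≤ numDistLab G k := by
  rw [← Nat.card_eq_fintype_card]
  refine Nat.card_le_card_of_injective (fun a => Quot.mk _ (F a)) ?_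
  intro a b hab
  exact hpair a b (labRel_equivalence.eqvGen_iff.mp (Quot.eq.mp hab))

lemma numDistLab_extract [Finite V] {n : ℕ} (h : n ≤ numDistLab G k) :
    ∃ F : Fin n → {f : V → Fin k // IsDistinguishing G k f},
      ∀ a b : Fin n, (∃ φ : G ≃g G, ∀ v, (F a).1 (φ v) = (F b).1 v) → a = b := by
  classical
  letI : Fintype (Quot (fun f g : {f : V → Fin k // IsDistinguishing G k f} =>
    ∃ φ : G ≃g G, ∀ v, f.1 (φ v) = g.1 v)) := Fintype.ofFinite _
  rw [numDistLab, Nat.card_eq_fintype_card] at h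
  obtain ⟨ι⟩ := Function.Embedding.nonempty_of_card_le (by simpa using h :
    Fintype.card (Fin n) ≤ _)
  refine ⟨fun a => (ι a).out, fun a b hab => ?_⟩
  have : ι a = ι b := by
    rw [← Quot.out_eq (ι a), ← Quot.out_eq (ι b)]
    exact Quot.sound hab
  exact ι.injective this
end Count

section Binom
variable {V : Type*} {G : SimpleGraph V}

/-- a distinguishing labeling with `distNum G` colors can be chosen surjective -/
lemma exists_surj_dist [Finite V] [Nonempty V]
    (f : V → Fin (distNum G)) (hf : IsDistinguishing G (distNum G) f) :
    Function.Surjective f := by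
  classical
  by_contra hns
  rw [Function.Surjective] at hns
  push_neg at hns
  obtain ⟨a, ha⟩ := hns
  obtain ⟨m, hm⟩ : ∃ m, distNum G = m + 1 := by
    refine ⟨distNum G - 1, ?_⟩
    have : distNum G ≠ 0 := by
      intro h0
      have x := f (Classical.arbitrary V)
      rw [h0] at x
      exact x.elim0
    omega
  -- recolor to avoid the last color
  set σ : Fin (distNum G) ≃ Fin (distNum G) :=
    Equiv.swap a (Fin.cast hm.symm (Fin.last m)) with hσ
  have hlast : ∀ v, σ (f v) ≠ Fin.cast hm.symm (Fin.last m) := by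
    intro v hv
    have : f v = a := by
      have := congrArg σ.symm hv
      rw [σ.symm_apply_apply] at this
      rw [this, hσ, Equiv.symm_swap, Equiv.swap_apply_right]
    exact ha v this
  let g : V → Fin m := fun v => (Fin.cast hm (σ (f v))).castPred
    (by
      intro h
      exact hlast v (by
        have := congrArg (Fin.cast hm.symm) h
        simpa using this))
  have hg : IsDistinguishing G m g := by
    intro φ hφ v
    refine hf φ ?_ v
    intro u
    have h1 : σ (f (φ u)) = σ (f u) := by
      have h2 := congrArg Fin.castSucc (hφ u)
      have h3 : ∀ w, (g w).castSucc = Fin.cast hm (σ (f w)) := fun w => Fin.castSucc_castPred _ _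
      rw [h3, h3] at h2
      have := congrArg (Fin.cast hm.symm) h2
      simpa using this
    exact σ.injective h1
  have : distNum G ≤ m := distNum_le hg
  omega

lemma le_choose {n m : ℕ} (h1 : 1 ≤ m) (h2 : m < n) : n ≤ n.choose m := by
  induction n generalizing m with
  | zero => omega
  | succ n ih =>
    rcases eq_or_lt_of_le h1 with h | h
    · rw [← h, Nat.choose_one_right]
    · obtain ⟨m', rfl⟩ : ∃ m', m = m' + 1 := ⟨m - 1, by omega⟩
      rcases eq_or_lt_of_le (Nat.lt_succ_iff.mp h2) with he | hlt
      · rw [he, Nat.choose_succ_self_right]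
      · have hb : n ≤ n.choose (m' + 1) := ih (by omega) hlt
        have hp : 1 ≤ n.choose m' := Nat.choose_pos (by omega)
        have hps : (n + 1).choose (m' + 1) = n.choose m' + n.choose (m' + 1) :=
          Nat.choose_succ_succ _ _
        omega

/-- binomial many inequivalent labelings with more colors -/
lemma choose_le_numDistLab [Finite V] [Nonempty V] {k : ℕ} (hk : distNum G ≤ k) :
    k.choose (distNum G) ≤ numDistLab G k := by
  classical
  cases nonempty_fintype V
  have hne : {r : ℕ | ∃ f : V → Fin r, IsDistinguishing G r f}.Nonempty :=
    ⟨Fintype.card V, Fintype.equivFin V, fun φ hφ v => (Fintype.equivFin V).injective (hφ v)⟩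
  obtain ⟨f, hf⟩ : ∃ f, IsDistinguishing G (distNum G) f := Nat.sInf_mem hne
  have hsurj := exists_surj_dist f hf
  have hcard : Fintype.card {s : Finset (Fin k) // s.card = distNum G} =
      k.choose (distNum G) := by
    rw [Fintype.card_finset_len, Fintype.card_fin]
  rw [← hcard]
  refine numDistLab_ge
    (fun S => ⟨fun v => (S.1.orderIsoOfFin S.2 (f v) : Fin k),
      hf.comp_inj (fun x => (S.1.orderIsoOfFin S.2 x : Fin k))
        (fun x y hxy => (S.1.orderIsoOfFin S.2).injective (Subtype.ext hxy))⟩) ?_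
  rintro S T ⟨φ, hφ⟩
  refine Subtype.ext ?_
  have hsub : T.1 ⊆ S.1 := by
    intro b hb
    obtain ⟨v, hv⟩ := hsurj ((T.1.orderIsoOfFin T.2).symm ⟨b, hb⟩)
    have hTb : (T.1.orderIsoOfFin T.2 (f v) : Fin k) = b := by
      rw [hv]
      simp
    have h5 : (S.1.orderIsoOfFin S.2 (f (φ v)) : Fin k) =
        (T.1.orderIsoOfFin T.2 (f v) : Fin k) := hφ v
    rw [hTb] at h5
    rw [← h5]
    exact (S.1.orderIsoOfFin S.2 (f (φ v))).2
  exact (Finset.eq_of_subset_of_card_le hsub (by rw [S.2, T.2])).symm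
end Binom

theorem stmt18 {V W : Type*} [Fintype V] [Fintype W] (G : SimpleGraph V)
    (H : SimpleGraph W) (d c : ℕ) (hd : 5 ≤ d) (hc : 2 ≤ c)
    (hH : H.Connected) (hiso : Nonempty (G ≃g copies c H))
    (hcrit : DistCritical G d) (hsmall : 2 * c < d) :
    d = distNum H + 1 ∧ 4 ≤ distNum H ∧
      2 * numDistLab H (distNum H) < distNum H - 1 := by
  classical
  obtain ⟨e⟩ := hiso
  obtain ⟨hdG, hcritp⟩ := hcrit
  have hdC : distNum (copies c H) = d := by rw [← distNum_iso e, hdG]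
  have hW : Nonempty W := by
    by_contra h
    rw [not_nonempty_iff] at h
    haveI : IsEmpty (Fin c × W) := ⟨fun x => h.false x.2⟩
    have h0 : distNum (copies c H) = 0 := distNum_empty _
    omega
  have w₀ : W := Classical.arbitrary W
  have hc0 : (0 : ℕ) < c := by omega
  have hc1 : (1 : ℕ) < c := by omega
  let j₀ : Fin c := ⟨0, hc0⟩
  let j₁ : Fin c := ⟨1, hc1⟩
  have hj10 : j₁ ≠ j₀ := by
    intro hq
    have := congrArg Fin.val hq
    simp [j₀, j₁] at this
  -- criticality transfers to the union of all copies except copy j₀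
  have hsne : (⇑e ⁻¹' {x : Fin c × W | x.1 ≠ j₀}) ≠ Set.univ := by
    intro huniv
    have hmem : e.symm (j₀, w₀) ∈ ⇑e ⁻¹' {x : Fin c × W | x.1 ≠ j₀} := by
      rw [huniv]; exact Set.mem_univ _
    rw [Set.mem_preimage] at hmem
    have he2 : e (e.symm (j₀, w₀)) = (j₀, w₀) := e.apply_symm_apply _
    rw [he2] at hmem
    exact hmem rfl
  have hindC : distNum ((copies c H).induce {x : Fin c × W | x.1 ≠ j₀}) ≠ d := by
    rw [← distNum_iso (induceIso e {x : Fin c × W | x.1 ≠ j₀})]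
    exact hcritp _ hsne
  obtain ⟨fC, hfC⟩ := exists_of_distNum_le (copies c H) (le_of_eq hdC)
  have hres : IsDistinguishing ((copies c H).induce {x : Fin c × W | x.1 ≠ j₀}) d
      (fun x => fC x.1) := restrict_dist j₀ hfC
  have hle : distNum ((copies c H).induce {x : Fin c × W | x.1 ≠ j₀}) ≤ d :=
    distNum_le hres
  have hlt : distNum ((copies c H).induce {x : Fin c × W | x.1 ≠ j₀}) ≤ d - 1 := by
    omega
  obtain ⟨g, hg⟩ := exists_of_distNum_le _ hlt
  -- upper bound on the number of inequivalent labelings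
  have hB : numDistLab H (d - 1) < c := by
    by_contra hge
    push_neg at hge
    obtain ⟨F, hF⟩ := numDistLab_extract (G := H) (k := d - 1) hge
    have hcomb := combine_dist hH (fun j v => (F j).1 v) (fun j => (F j).2)
      (fun a b hab => hF a b hab)
    have : distNum (copies c H) ≤ d - 1 := distNum_le hcomb
    omega
  -- bounds on distNum H
  have hDle : distNum H ≤ d - 1 := distNum_le (single_copy_dist hg hj10)
  have hD1 : 1 ≤ distNum H := by
    obtain ⟨fH, hfH⟩ := exists_distNum H
    by_contra h0
    have h0' : distNum H = 0 := by omega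
    have x := fH w₀
    rw [h0'] at x
    exact x.elim0
  have hDge : d - 1 ≤ distNum H := by
    by_contra hlt2
    push_neg at hlt2
    have hch : (d - 1).choose (distNum H) ≤ numDistLab H (d - 1) :=
      choose_le_numDistLab (by omega)
    have hle2 : d - 1 ≤ (d - 1).choose (distNum H) := le_choose hD1 (by omega)
    omega
  have hDeq : distNum H = d - 1 := le_antisymm hDle hDge
  refine ⟨by omega, by omega, ?_⟩
  rw [hDeq]
  omega
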